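/- Let 1 ≤ i < j ≤ m−1, let n = 2q be even with q ≥ 1, and suppose m ≥ 2j−1. Then α_j ≱_PS α_i; that is, there exists a profile of n preferences over m candidates at which the i-approval rule α_i is manipulable but the j-approval rule α_j is not manipulable. -/

import Mathlib

/-- A preference order on `m` candidates: `σ c` is the position of candidate `c`
(position `0` is the most preferred). `σ c < σ d` means `c` is strictly preferred to `d`. -/
abbrev Pref (m : ℕ) := Fin m ≃ Fin m

/-- A voting rule for `n` voters and `m` candidates. -/
abbrev Rule (m n : ℕ) := (Fin n → Pref m) → Fin m

/-- Total score of candidate `c` under score vector `s` (indexed by position) at profile `P`. -/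
def score {m n : ℕ} (s : Fin m → ℕ) (P : Fin n → Pref m) (c : Fin m) : ℕ :=
  ∑ v, s (P v c)

/-- The scoring rule with score vector `s`: the winner is the candidate that is first in the
lexicographic tie-breaking order (i.e. has the least index) among those of maximal score. -/
def winner {m n : ℕ} [NeZero m] (s : Fin m → ℕ) (P : Fin n → Pref m) : Fin m :=
  (Finset.univ.filter fun c => ∀ d, score s P d ≤ score s P c).min' (by
    obtain ⟨c, -, hc⟩ := Finset.exists_max_image Finset.univ (score s P) Finset.univ_nonempty
    exact ⟨c, Finset.mem_filter.mpr ⟨Finset.mem_univ c, fun d => hc d (Finset.mem_univ d)⟩⟩)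

/-- `k`-approval, `α_k`: one point for each of the top `k` positions. -/
def approval (m n k : ℕ) [NeZero m] : Rule m n :=
  winner (fun r => if (r : ℕ) < k then 1 else 0)

/-- `k`-Borda, `β_k`: `max (0, k - r + 1)` points for (`1`-indexed) position `r`, i.e. `k - r`
(truncated subtraction) points for `0`-indexed position `r`. -/
def kBorda (m n k : ℕ) [NeZero m] : Rule m n :=
  winner (fun r => k - (r : ℕ))

/-- `f` is manipulable at profile `P`: some voter `v` can misreport some preference `Q` and
obtain an outcome strictly preferred (by `v`'s true preferences) to the sincere outcome. -/
def Manipulable {m n : ℕ} (f : Rule m n) (P : Fin n → Pref m) : Prop :=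
  ∃ (v : Fin n) (Q : Pref m), P v (f (Function.update P v Q)) < P v (f P)

/-- `f ≥_PS g` : every profile at which `g` is manipulable is one at which `f` is manipulable. -/
def MoreManip {m n : ℕ} (f g : Rule m n) : Prop :=
  ∀ P : Fin n → Pref m, Manipulable g P → Manipulable f P

-- helpers (already tested)
lemma winner_spec {m n : ℕ} [NeZero m] (s : Fin m → ℕ) (P : Fin n → Pref m) (d : Fin m) :
    score s P d ≤ score s P (winner s P) := by
  have h : winner s P ∈ Finset.univ.filter fun c => ∀ d, score s P d ≤ score s P c :=
    Finset.min'_mem _ _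
  exact (Finset.mem_filter.mp h).2 d

lemma winner_eq {m n : ℕ} [NeZero m] (s : Fin m → ℕ) (P : Fin n → Pref m) (c : Fin m)
    (hmax : ∀ d, score s P d ≤ score s P c)
    (hlt : ∀ d, d < c → score s P d < score s P c) : winner s P = c := by
  have hc : c ∈ Finset.univ.filter fun c => ∀ d, score s P d ≤ score s P c :=
    Finset.mem_filter.mpr ⟨Finset.mem_univ c, hmax⟩
  have h1 : winner s P ≤ c := Finset.min'_le _ _ hc
  rcases lt_or_eq_of_le h1 with h | h
  · have h2 := winner_spec s P c
    have h3 := hlt _ h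
    omega
  · exact h

lemma score_update {m n : ℕ} (s : Fin m → ℕ) (P : Fin n → Pref m) (v : Fin n) (Q : Pref m)
    (d : Fin m) :
    score s (Function.update P v Q) d + s (P v d) = score s P d + s (Q d) := by
  unfold score
  have h : (fun w => s (Function.update P v Q w d)) =
      Function.update (fun w => s (P w d)) v (s (Q d)) := by
    funext w
    rcases eq_or_ne w v with rfl | h
    · simp
    · simp [Function.update_of_ne h]
  rw [h, Finset.sum_update_of_mem (Finset.mem_univ v),
    ← Finset.add_sum_erase _ _ (Finset.mem_univ v), Finset.sdiff_singleton_eq_erase]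
  ring

noncomputable def mkPref (m : ℕ) (f : ℕ → ℕ) (hf : ∀ c, c < m → f c < m)
    (hinj : ∀ c₁ c₂, c₁ < m → c₂ < m → f c₁ = f c₂ → c₁ = c₂) : Pref m :=
  Equiv.ofBijective (fun c : Fin m => ⟨f ↑c, hf _ c.2⟩)
    (Finite.injective_iff_bijective.mp fun a b h =>
      Fin.ext (hinj _ _ a.2 b.2 (by simpa using congrArg Fin.val h)))

@[simp] lemma mkPref_val (m : ℕ) (f : ℕ → ℕ) (hf hinj) (c : Fin m) :
    ((mkPref m f hf hinj) c : ℕ) = f ↑c := rfl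

lemma score_piecewise {m n q : ℕ} (hn : n = 2 * q) (hq : 1 ≤ q)
    (s : Fin m → ℕ) (σA σB σB' : Pref m) (P : Fin n → Pref m)
    (hP : ∀ v : Fin n, P v = if (v : ℕ) < q then σA else if (v : ℕ) = 2 * q - 1 then σB else σB')
    (c : Fin m) :
    score s P c = q * s (σA c) + (q - 1) * s (σB' c) + s (σB c) := by
  subst hn
  unfold score
  rw [Finset.sum_congr rfl (g := fun v : Fin (2*q) =>
      (fun k : ℕ => if k < q then s (σA c) else if k = 2 * q - 1 then s (σB c) else s (σB' c)) ↑v)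
    (fun v _ => by rw [hP v]; dsimp only; split_ifs <;> rfl)]
  rw [Fin.sum_univ_eq_sum_range (fun k : ℕ => if k < q then s (σA c) else if k = 2 * q - 1 then s (σB c) else s (σB' c)) (2*q)]
  rw [Finset.range_eq_Ico,
    ← Finset.sum_Ico_consecutive _ (show 0 ≤ 2*q-1 by omega) (show 2*q-1 ≤ 2*q by omega),
    ← Finset.sum_Ico_consecutive _ (show 0 ≤ q by omega) (show q ≤ 2*q-1 by omega)]
  rw [show (∑ k ∈ Finset.Ico 0 q,
        (if k < q then s (σA c) else if k = 2*q-1 then s (σB c) else s (σB' c)))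
      = ∑ _k ∈ Finset.Ico 0 q, s (σA c) from
    Finset.sum_congr rfl (fun k hk => if_pos (Finset.mem_Ico.mp hk).2)]
  rw [show (∑ k ∈ Finset.Ico q (2*q-1),
        (if k < q then s (σA c) else if k = 2*q-1 then s (σB c) else s (σB' c)))
      = ∑ _k ∈ Finset.Ico q (2*q-1), s (σB' c) from
    Finset.sum_congr rfl (fun k hk => by
      have h1 := (Finset.mem_Ico.mp hk).1
      have h2 := (Finset.mem_Ico.mp hk).2
      rw [if_neg (by omega), if_neg (by omega)])]
  rw [show (∑ k ∈ Finset.Ico (2*q-1) (2*q),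
        (if k < q then s (σA c) else if k = 2*q-1 then s (σB c) else s (σB' c)))
      = ∑ _k ∈ Finset.Ico (2*q-1) (2*q), s (σB c) from
    Finset.sum_congr rfl (fun k hk => by
      have h1 := (Finset.mem_Ico.mp hk).1
      have h2 := (Finset.mem_Ico.mp hk).2
      rw [if_neg (by omega), if_pos (by omega)])]
  rw [Finset.sum_const, Finset.sum_const, Finset.sum_const, Nat.card_Ico, Nat.card_Ico,
    Nat.card_Ico]
  rw [show 2*q-1-q = q-1 by omega, show 2*q-(2*q-1) = 1 by omega, show q - 0 = q by omega]
  simp [smul_eq_mul]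

-- the three ballots
def fA (i : ℕ) : ℕ → ℕ := fun c => if c = 0 then i else if c ≤ i then c - 1 else c
def fB (i j : ℕ) : ℕ → ℕ := fun c =>
  if c = 0 then i else if c < j then c + j - 1
  else if c < j + i then c - j else if c ≤ 2*j-2 then c - j + 1 else c
def sw (i : ℕ) : ℕ → ℕ := fun p => if p = i then i - 1 else if p = i - 1 then i else p
def fB' (i j : ℕ) : ℕ → ℕ := fun c => sw i (fB i j c)

section Perms
variable {m i j : ℕ} (hi : 1 ≤ i) (hij : i < j) (hm : 2*j-1 ≤ m)
include hi hij hm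

lemma fA_lt : ∀ c, c < m → fA i c < m := by
  intro c hc; simp only [fA]; split_ifs <;> omega
lemma fA_inj : ∀ c₁ c₂, c₁ < m → c₂ < m → fA i c₁ = fA i c₂ → c₁ = c₂ := by
  intro c₁ c₂ h1 h2; simp only [fA]; split_ifs <;> omega
lemma fB_lt : ∀ c, c < m → fB i j c < m := by
  intro c hc; simp only [fB]; split_ifs <;> omega
lemma fB_inj : ∀ c₁ c₂, c₁ < m → c₂ < m → fB i j c₁ = fB i j c₂ → c₁ = c₂ := by
  intro c₁ c₂ h1 h2; simp only [fB]; split_ifs <;> omega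
lemma sw_lt : ∀ p, p < m → sw i p < m := by
  intro p hp; simp only [sw]; split_ifs <;> omega
lemma sw_inj : ∀ p₁ p₂, p₁ < m → p₂ < m → sw i p₁ = sw i p₂ → p₁ = p₂ := by
  intro p₁ p₂ h1 h2; simp only [sw]; split_ifs <;> omega
lemma fB'_lt : ∀ c, c < m → fB' i j c < m := fun c hc =>
  sw_lt hi hij hm _ (fB_lt hi hij hm c hc)
lemma fB'_inj : ∀ c₁ c₂, c₁ < m → c₂ < m → fB' i j c₁ = fB' i j c₂ → c₁ = c₂ :=
  fun c₁ c₂ h1 h2 h => fB_inj hi hij hm c₁ c₂ h1 h2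
    (sw_inj hi hij hm _ _ (fB_lt hi hij hm c₁ h1) (fB_lt hi hij hm c₂ h2) h)

end Perms

noncomputable def sigA (m i j : ℕ) (hi : 1 ≤ i) (hij : i < j) (hm : 2*j-1 ≤ m) : Pref m :=
  mkPref m (fA i) (fA_lt hi hij hm) (fA_inj hi hij hm)
noncomputable def sigB (m i j : ℕ) (hi : 1 ≤ i) (hij : i < j) (hm : 2*j-1 ≤ m) : Pref m :=
  mkPref m (fB i j) (fB_lt hi hij hm) (fB_inj hi hij hm)
noncomputable def sigB' (m i j : ℕ) (hi : 1 ≤ i) (hij : i < j) (hm : 2*j-1 ≤ m) : Pref m :=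
  mkPref m (fB' i j) (fB'_lt hi hij hm) (fB'_inj hi hij hm)


lemma regions {m i j : ℕ} (hi : 1 ≤ i) (hij : i < j) (hm : 2*j-1 ≤ m) (d : ℕ) (hd : d < m) :
    (fA i d = i ∧ fB i j d = i ∧ fB' i j d = i-1 ∧ d = 0) ∨
    (fA i d = d-1 ∧ fB i j d = d+j-1 ∧ fB' i j d = d+j-1 ∧ 1 ≤ d ∧ d ≤ i) ∨
    (fA i d = d ∧ fB i j d = d+j-1 ∧ fB' i j d = d+j-1 ∧ i < d ∧ d < j) ∨
    (fA i d = d ∧ fB i j d = d-j ∧ fB' i j d = d-j ∧ j ≤ d ∧ d < j+i-1) ∨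
    (fA i d = d ∧ fB i j d = i-1 ∧ fB' i j d = i ∧ d = j+i-1) ∨
    (fA i d = d ∧ fB i j d = d-j+1 ∧ fB' i j d = d-j+1 ∧ j+i ≤ d ∧ d ≤ 2*j-2) ∨
    (fA i d = d ∧ fB i j d = d ∧ fB' i j d = d ∧ 2*j-1 ≤ d) := by
  by_cases h0 : d = 0
  · subst h0
    exact Or.inl ⟨by simp [fA], by simp [fB], by simp [fB', fB, sw], rfl⟩
  by_cases hdi : d ≤ i
  · refine Or.inr (Or.inl ⟨?_, ?_, ?_, by omega, hdi⟩)
    · simp only [fA]; rw [if_neg h0, if_pos hdi]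
    · simp only [fB]; rw [if_neg h0, if_pos (by omega)]
    · simp only [fB']
      rw [show fB i j d = d + j - 1 from by
        simp only [fB]; rw [if_neg h0, if_pos (by omega)]]
      simp only [sw]; rw [if_neg (by omega), if_neg (by omega)]
  by_cases hdj : d < j
  · refine Or.inr (Or.inr (Or.inl ⟨?_, ?_, ?_, by omega, hdj⟩))
    · simp only [fA]; rw [if_neg h0, if_neg hdi]
    · simp only [fB]; rw [if_neg h0, if_pos hdj]
    · simp only [fB']
      rw [show fB i j d = d + j - 1 from by
        simp only [fB]; rw [if_neg h0, if_pos hdj]]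
      simp only [sw]; rw [if_neg (by omega), if_neg (by omega)]
  by_cases hd4 : d < j + i - 1
  · refine Or.inr (Or.inr (Or.inr (Or.inl ⟨?_, ?_, ?_, by omega, hd4⟩)))
    · simp only [fA]; rw [if_neg h0, if_neg hdi]
    · simp only [fB]; rw [if_neg h0, if_neg hdj, if_pos (by omega)]
    · simp only [fB']
      rw [show fB i j d = d - j from by
        simp only [fB]; rw [if_neg h0, if_neg hdj, if_pos (by omega)]]
      simp only [sw]; rw [if_neg (by omega), if_neg (by omega)]
  by_cases hd5 : d = j + i - 1
  · refine Or.inr (Or.inr (Or.inr (Or.inr (Or.inl ⟨?_, ?_, ?_, hd5⟩))))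
    · simp only [fA]; rw [if_neg h0, if_neg hdi]
    · simp only [fB]; rw [if_neg h0, if_neg hdj, if_pos (by omega)]; omega
    · simp only [fB']
      rw [show fB i j d = i - 1 from by
        simp only [fB]; rw [if_neg h0, if_neg hdj, if_pos (by omega)]; omega]
      simp only [sw]; rw [if_neg (by omega)]; simp
  by_cases hd6 : d ≤ 2*j-2
  · refine Or.inr (Or.inr (Or.inr (Or.inr (Or.inr (Or.inl ⟨?_, ?_, ?_, by omega, hd6⟩)))))
    · simp only [fA]; rw [if_neg h0, if_neg hdi]
    · simp only [fB]; rw [if_neg h0, if_neg hdj, if_neg (by omega), if_pos hd6]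
    · simp only [fB']
      rw [show fB i j d = d - j + 1 from by
        simp only [fB]; rw [if_neg h0, if_neg hdj, if_neg (by omega), if_pos hd6]]
      simp only [sw]; rw [if_neg (by omega), if_neg (by omega)]
  · refine Or.inr (Or.inr (Or.inr (Or.inr (Or.inr (Or.inr ⟨?_, ?_, ?_, by omega⟩)))))
    · simp only [fA]; rw [if_neg h0, if_neg hdi]
    · simp only [fB]; rw [if_neg h0, if_neg hdj, if_neg (by omega), if_neg hd6]
    · simp only [fB']
      rw [show fB i j d = d from by
        simp only [fB]; rw [if_neg h0, if_neg hdj, if_neg (by omega), if_neg hd6]]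
      simp only [sw]; rw [if_neg (by omega), if_neg (by omega)]

lemma val_lemmas {i j : ℕ} (hi : 1 ≤ i) (hij : i < j) :
    fA i 0 = i ∧ fB i j 0 = i ∧ fB' i j 0 = i - 1 ∧
    fA i 1 = 0 ∧ fB i j 1 = j ∧ fB' i j 1 = j := by
  have h1j : 1 < j := by omega
  have hB1 : fB i j 1 = j := by
    simp only [fB]; rw [if_neg (by omega), if_pos h1j]; omega
  refine ⟨by simp [fA], by simp [fB], by simp [fB', fB, sw], ?_, hB1, ?_⟩
  · simp only [fA]; rw [if_neg (by omega), if_pos hi]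
  · simp only [fB']; rw [hB1]; simp only [sw]
    split_ifs <;> omega


set_option maxHeartbeats 1600000 in
/-- For `1 ≤ i < j ≤ m-1`, `n = 2q` even with `q ≥ 1`, and `m ≥ 2j-1`: `α_j ≱_PS α_i`. -/
theorem stmt_1 (m n q i j : ℕ) [NeZero m] (hi : 1 ≤ i) (hij : i < j) (hj : j ≤ m - 1)
    (hq : 1 ≤ q) (hn : n = 2 * q) (hm : 2 * j - 1 ≤ m) :
    ∃ P : Fin n → Pref m,
      Manipulable (approval m n i) P ∧ ¬ Manipulable (approval m n j) P := by
  have hm1 : 1 ≤ m := Nat.pos_of_ne_zero (NeZero.ne m)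
  have hjm : j < m := by omega
  have him : i < m := by omega
  obtain ⟨hA0, hB0, hC0, hA1, hB1, hC1⟩ := val_lemmas hi hij
  set σA := sigA m i j hi hij hm with hσA
  set σB := sigB m i j hi hij hm with hσB
  set σC := sigB' m i j hi hij hm with hσC
  set P : Fin n → Pref m :=
    fun v => if (v : ℕ) < q then σA else if (v : ℕ) = 2*q-1 then σB else σC with hPdef
  have hP : ∀ v : Fin n,
      P v = if (v : ℕ) < q then σA else if (v : ℕ) = 2*q-1 then σB else σC :=
    fun v => by rw [hPdef]
  have hscore : ∀ (k : ℕ) (c : Fin m),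
      score (fun r : Fin m => if (r : ℕ) < k then 1 else 0) P c
        = q * (if fA i ↑c < k then 1 else 0) + (q-1) * (if fB' i j ↑c < k then 1 else 0)
          + (if fB i j ↑c < k then 1 else 0) :=
    fun k c => score_piecewise hn hq _ σA σB σC P hP c
  set v0 : Fin n := ⟨2*q-1, by omega⟩ with hv0def
  have hv0v : (v0 : ℕ) = 2*q-1 := by rw [hv0def]
  have hP' : ∀ v : Fin n, Function.update P v0 σC v
      = if (v : ℕ) < q then σA else if (v : ℕ) = 2*q-1 then σC else σC := by
    intro v
    rcases eq_or_ne v v0 with rfl | hv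
    · rw [Function.update_self, hv0v, if_neg (by omega), if_pos rfl]
    · rw [Function.update_of_ne hv, hP v]
      have hvne : (v : ℕ) ≠ 2*q-1 := fun h => hv (Fin.ext (by rw [h, hv0v]))
      split_ifs <;> first | rfl | exact absurd ‹_› hvne
  have hscore' : ∀ (k : ℕ) (c : Fin m),
      score (fun r : Fin m => if (r : ℕ) < k then 1 else 0) (Function.update P v0 σC) c
        = q * (if fA i ↑c < k then 1 else 0) + (q-1) * (if fB' i j ↑c < k then 1 else 0)
          + (if fB' i j ↑c < k then 1 else 0) :=
    fun k c => score_piecewise hn hq _ σA σC σC _ hP' c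
  have hc0v : ((0 : Fin m) : ℕ) = 0 := Fin.val_zero m
  set c1 : Fin m := ⟨1, by omega⟩ with hc1def
  have hc1v : (c1 : ℕ) = 1 := by rw [hc1def]
  -- honest i-approval winner: candidate 1
  have hW1 : winner (fun r : Fin m => if (r : ℕ) < i then 1 else 0) P = c1 := by
    apply winner_eq
    · intro d
      rw [hscore, hscore, hc1v, hA1, hB1, hC1]
      rcases regions hi hij hm ↑d d.2 with h|h|h|h|h|h|h <;>
        obtain ⟨h1, h2, h3, hr⟩ := h <;> rw [h1, h2, h3] <;> split_ifs <;> omega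
    · intro d hd
      have hd1 : (d : ℕ) < 1 := hd
      rw [hscore, hscore, hc1v, hA1, hB1, hC1]
      rcases regions hi hij hm ↑d d.2 with h|h|h|h|h|h|h <;>
        obtain ⟨h1, h2, h3, hr⟩ := h <;> rw [h1, h2, h3] <;> split_ifs <;> omega
  -- manipulated i-approval winner: candidate 0
  have hW0 : winner (fun r : Fin m => if (r : ℕ) < i then 1 else 0)
      (Function.update P v0 σC) = 0 := by
    apply winner_eq
    · intro d
      rw [hscore', hscore', hc0v, hA0, hC0]
      rcases regions hi hij hm ↑d d.2 with h|h|h|h|h|h|h <;>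
        obtain ⟨h1, h2, h3, hr⟩ := h <;> rw [h1, h3] <;> split_ifs <;> omega
    · intro d hd
      have hd1 : (d : ℕ) < ((0 : Fin m) : ℕ) := hd
      rw [hc0v] at hd1
      exact absurd hd1 (Nat.not_lt_zero _)
  -- honest j-approval winner: candidate 0
  have hWj : winner (fun r : Fin m => if (r : ℕ) < j then 1 else 0) P = 0 := by
    apply winner_eq
    · intro d
      rw [hscore, hscore, hc0v, hA0, hB0, hC0]
      rcases regions hi hij hm ↑d d.2 with h|h|h|h|h|h|h <;>
        obtain ⟨h1, h2, h3, hr⟩ := h <;> rw [h1, h2, h3] <;> split_ifs <;> omega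
    · intro d hd
      have hd1 : (d : ℕ) < ((0 : Fin m) : ℕ) := hd
      rw [hc0v] at hd1
      exact absurd hd1 (Nat.not_lt_zero _)
  have hPv0B : P v0 = σB := by
    rw [hP v0, hv0v, if_neg (by omega), if_pos rfl]
  refine ⟨P, ⟨v0, σC, ?_⟩, ?_⟩
  · -- i-approval is manipulable
    unfold approval
    rw [hW0, hW1, hPv0B]
    have e0 : ((σB 0 : Fin m) : ℕ) = i := by
      rw [hσB]; simp only [sigB, mkPref_val, hc0v, hB0]
    have e1 : ((σB c1 : Fin m) : ℕ) = j := by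
      rw [hσB]; simp only [sigB, mkPref_val, hc1v, hB1]
    rw [Fin.lt_def, e0, e1]
    exact hij
  · -- j-approval is not manipulable
    rintro ⟨v, Q, hman⟩
    unfold approval at hman
    rw [hWj] at hman
    set W := winner (fun r : Fin m => if (r : ℕ) < j then 1 else 0) (Function.update P v Q)
      with hWdef
    rcases eq_or_ne W 0 with h0 | h0
    · rw [h0] at hman; exact lt_irrefl _ hman
    · have hw0 : (W : ℕ) ≠ 0 := fun h => h0 (Fin.ext (h.trans hc0v.symm))
      have hmax' := winner_spec (fun r : Fin m => if (r : ℕ) < j then 1 else 0)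
        (Function.update P v Q)
      have hnot : ¬ (∀ d, score (fun r : Fin m => if (r : ℕ) < j then 1 else 0)
          (Function.update P v Q) d ≤ score (fun r : Fin m => if (r : ℕ) < j then 1 else 0)
          (Function.update P v Q) 0) := by
        intro hall
        refine h0 (winner_eq _ _ 0 hall ?_)
        intro d hd
        have hd1 : (d : ℕ) < ((0 : Fin m) : ℕ) := hd
        rw [hc0v] at hd1
        exact absurd hd1 (Nat.not_lt_zero _)
      push_neg at hnot
      obtain ⟨e, he⟩ := hnot
      have h1 : score (fun r : Fin m => if (r : ℕ) < j then 1 else 0)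
          (Function.update P v Q) 0 < score (fun r : Fin m => if (r : ℕ) < j then 1 else 0)
          (Function.update P v Q) W := lt_of_lt_of_le he (hmax' e)
      have e0 := score_update (fun r : Fin m => if (r : ℕ) < j then 1 else 0) P v Q 0
      have eW := score_update (fun r : Fin m => if (r : ℕ) < j then 1 else 0) P v Q W
      have hsc0 : score (fun r : Fin m => if (r : ℕ) < j then 1 else 0) P 0 = 2*q := by
        rw [hscore, hc0v, hA0, hB0, hC0]
        split_ifs <;> omega
      have hscW : score (fun r : Fin m => if (r : ℕ) < j then 1 else 0) P W ≤ q := by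
        rw [hscore]
        rcases regions hi hij hm ↑W W.2 with h|h|h|h|h|h|h <;>
          obtain ⟨h1, h2, h3, hr⟩ := h <;> rw [h1, h2, h3] <;> split_ifs <;> omega
      have b1 : (if ((Q 0 : Fin m) : ℕ) < j then 1 else 0) ≤ 1 := by split_ifs <;> omega
      have b2 : (if ((Q W : Fin m) : ℕ) < j then 1 else 0) ≤ 1 := by split_ifs <;> omega
      have b3 : (if ((P v 0 : Fin m) : ℕ) < j then 1 else 0) ≤ 1 := by split_ifs <;> omega
      have hPvWj : ¬ ((P v W : Fin m) : ℕ) < j := by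
        intro hlt2
        rw [if_pos hlt2] at eW
        omega
      have hPv0i : ((P v 0 : Fin m) : ℕ) ≤ i := by
        rw [hP v]
        split_ifs
        · rw [hσA]; simp only [sigA, mkPref_val, hc0v, hA0]; omega
        · rw [hσB]; simp only [sigB, mkPref_val, hc0v, hB0]; omega
        · rw [hσC]; simp only [sigB', mkPref_val, hc0v, hC0]; omega
      have hman' : ((P v W : Fin m) : ℕ) < ((P v 0 : Fin m) : ℕ) := hman
      omega
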